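/- arXiv:2509.12522 — 2 statements merged into one kernel-verified Lean document; each statement's English description precedes it below -/
import Mathlib

section
/- Let N ≥ 1 and let S_1, …, S_{N+1} be real-valued random variables on a probability space that are exchangeable (for every permutation σ of {1, …, N+1}, the joint law of (S_{σ(1)}, …, S_{σ(N+1)}) equals the joint law of (S_1, …, S_{N+1})) and almost surely pairwise distinct. Then the rank of S_{N+1} among S_1, …, S_{N+1} (i.e., the number of indices i ∈ {1, …, N+1} with S_i ≤ S_{N+1}) is uniformly distributed on {1, …, N+1}: for every k ∈ {1, …, N+1}, the probability that the rank equals k is 1/(N+1). -/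
open MeasureTheory

noncomputable def rnk {n : ℕ} (f : Fin (n+1) → ℝ) (j : Fin (n+1)) : ℕ :=
  (Finset.univ.filter (fun i => f i ≤ f j)).card

lemma rnk_pos {n : ℕ} (f : Fin (n+1) → ℝ) (j : Fin (n+1)) : 1 ≤ rnk f j := by
  have : j ∈ Finset.univ.filter (fun i => f i ≤ f j) := by simp
  exact Finset.card_pos.mpr ⟨j, this⟩

lemma rnk_le {n : ℕ} (f : Fin (n+1) → ℝ) (j : Fin (n+1)) : rnk f j ≤ n + 1 := by
  simpa [rnk] using Finset.card_filter_le Finset.univ (fun i => f i ≤ f j)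

lemma rnk_inj {n : ℕ} {f : Fin (n+1) → ℝ} (hf : Function.Injective f) :
    Function.Injective (rnk f) := by
  intro a b hab
  by_contra hne
  have key : ∀ x y : Fin (n+1), f x < f y → rnk f x = rnk f y → False := by
    intro x y hxy hr
    have hss : Finset.univ.filter (fun i => f i ≤ f x) ⊂
        Finset.univ.filter (fun i => f i ≤ f y) := by
      refine Finset.ssubset_iff_of_subset (fun i hi => ?_) |>.2 ⟨y, by simp, by
        simp [not_le.mpr hxy]⟩
      simp only [Finset.mem_filter, Finset.mem_univ, true_and] at hi ⊢
      exact hi.trans hxy.le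
    exact absurd hr (Nat.ne_of_lt (Finset.card_lt_card hss))
  rcases lt_or_gt_of_ne (fun e => hne (hf e)) with h | h
  · exact key a b h hab
  · exact key b a h hab.symm

lemma rnk_surj {n : ℕ} {f : Fin (n+1) → ℝ} (hf : Function.Injective f)
    {k : ℕ} (hk1 : 1 ≤ k) (hk2 : k ≤ n + 1) : ∃ j, rnk f j = k := by
  set g : Fin (n+1) → Fin (n+1) := fun j => ⟨rnk f j - 1, by
    have := rnk_le f j; have := rnk_pos f j; omega⟩ with hg
  have hginj : Function.Injective g := by
    intro a b hab
    apply rnk_inj hf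
    have h1 := rnk_pos f a; have h2 := rnk_pos f b
    have := congrArg Fin.val hab
    simp only [hg] at this
    omega
  have hgsurj : Function.Surjective g := Finite.surjective_of_injective hginj
  obtain ⟨j, hj⟩ := hgsurj ⟨k - 1, by omega⟩
  refine ⟨j, ?_⟩
  have := congrArg Fin.val hj
  simp only [hg] at this
  have := rnk_pos f j
  omega

/-- For exchangeable, a.s. pairwise distinct real random variables
`S 0, …, S N` (that is, `N + 1` of them), the rank of the last one among all of
them, i.e. `#{i : S i ≤ S (Fin.last N)}`, is uniformly distributed on `{1, …, N+1}`. -/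
theorem rank_uniform
    {Ω : Type*} [MeasurableSpace Ω] (P : Measure Ω) [IsProbabilityMeasure P]
    (N : ℕ) (hN : 1 ≤ N) (S : Fin (N + 1) → Ω → ℝ)
    (hmeas : ∀ i, Measurable (S i))
    (hexch : ∀ π : Equiv.Perm (Fin (N + 1)),
      Measure.map (fun ω => fun i => S (π i) ω) P
        = Measure.map (fun ω => fun i => S i ω) P)
    (hdist : ∀ i j, i ≠ j → P {ω | S i ω = S j ω} = 0)
    (k : ℕ) (hk1 : 1 ≤ k) (hk2 : k ≤ N + 1) :
    P {ω | (Finset.univ.filter (fun i => S i ω ≤ S (Fin.last N) ω)).card = k}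
      = ((N : ENNReal) + 1)⁻¹ := by
  -- setup
  set f : Ω → (Fin (N+1) → ℝ) := fun ω i => S i ω with hf
  have hfmeas : Measurable f := measurable_pi_lambda _ hmeas
  -- measurability of rank sets in the product space
  have hrnkmeas : ∀ j : Fin (N+1), Measurable (fun x : Fin (N+1) → ℝ => rnk x j) := by
    intro j
    have : (fun x : Fin (N+1) → ℝ => rnk x j)
        = fun x => ∑ i : Fin (N+1), if x i ≤ x j then 1 else 0 := by
      funext x; exact Finset.card_filter _ _
    rw [this]
    exact Finset.measurable_sum _ fun i _ => Measurable.ite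
      (measurableSet_le (measurable_pi_apply i) (measurable_pi_apply j))
      measurable_const measurable_const
  set B : Fin (N+1) → Set (Fin (N+1) → ℝ) := fun j => {x | rnk x j = k} with hB
  have hBmeas : ∀ j, MeasurableSet (B j) := fun j =>
    hrnkmeas j (MeasurableSet.singleton k)
  set A : Fin (N+1) → Set Ω := fun j => f ⁻¹' (B j) with hA
  have hAmeas : ∀ j, MeasurableSet (A j) := fun j => hfmeas (hBmeas j)
  have hAdef : ∀ j, A j = {ω | rnk (f ω) j = k} := fun j => rfl
  -- Step A: equal probabilities
  have stepA : ∀ j, P (A j) = P (A (Fin.last N)) := by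
    intro j
    have hπ := hexch (Equiv.swap j (Fin.last N))
    set π := Equiv.swap j (Fin.last N) with hπdef
    have hg : Measurable (fun ω => fun i => S (π i) ω) :=
      measurable_pi_lambda _ fun i => hmeas _
    have h1 := congrArg (fun μ : Measure (Fin (N+1) → ℝ) => μ (B (Fin.last N))) hπ
    simp only [Measure.map_apply hg (hBmeas _), Measure.map_apply hfmeas (hBmeas _)] at h1
    have h2 : (fun ω => fun i => S (π i) ω) ⁻¹' (B (Fin.last N)) = A j := by
      ext ω
      simp only [Set.mem_preimage, hB, hA, Set.mem_setOf_eq, rnk]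
      have hcard : (Finset.univ.filter (fun i => S (π i) ω ≤ S (π (Fin.last N)) ω)).card
          = (Finset.univ.filter (fun i => S i ω ≤ S (π (Fin.last N)) ω)).card := by
        rw [Finset.card_filter, Finset.card_filter]
        exact Fintype.sum_equiv π _ _ (fun i => rfl)
      have hπlast : π (Fin.last N) = j := Equiv.swap_apply_right _ _
      rw [hcard, hπlast]
    rw [h2] at h1
    exact h1
  -- Step B: null set of coincidences
  set D : Set Ω := ⋃ i, ⋃ j, {ω | i ≠ j ∧ S i ω = S j ω} with hD
  have hDmeas : MeasurableSet D := by
    refine MeasurableSet.iUnion fun i => MeasurableSet.iUnion fun j => ?_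
    by_cases h : i = j
    · simp [h]
    · have : {ω | i ≠ j ∧ S i ω = S j ω} = {ω | S i ω = S j ω} := by
        ext ω; simp [h]
      rw [this]; exact measurableSet_eq_fun (hmeas i) (hmeas j)
  have hDnull : P D = 0 := by
    refine measure_iUnion_null fun i => measure_iUnion_null fun j => ?_
    by_cases h : i = j
    · simp [h]
    · refine measure_mono_null (fun ω hω => hω.2) (hdist i j h)
  -- injectivity off D
  have hinj : ∀ ω ∉ D, Function.Injective (f ω) := by
    intro ω hω a b hab
    by_contra hne
    exact hω (Set.mem_iUnion.2 ⟨a, Set.mem_iUnion.2 ⟨b, hne, hab⟩⟩)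
  -- Step C/D
  set C : Fin (N+1) → Set Ω := fun j => A j ∩ Dᶜ with hC
  have hCdisj : Pairwise (Function.onFun Disjoint C) := by
    intro a b hab
    refine Set.disjoint_left.2 fun ω hωa hωb => ?_
    have h1 : rnk (f ω) a = k := hωa.1
    have h2 : rnk (f ω) b = k := hωb.1
    exact hab (rnk_inj (hinj ω hωa.2) (h1.trans h2.symm))
  have hCunion : (⋃ j, C j) = Dᶜ := by
    ext ω
    simp only [Set.mem_iUnion, hC, Set.mem_inter_iff, Set.mem_compl_iff]
    constructor
    · rintro ⟨j, _, h⟩; exact h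
    · intro h
      obtain ⟨j, hj⟩ := rnk_surj (hinj ω h) hk1 hk2
      exact ⟨j, hj, h⟩
  have hPDc : P Dᶜ = 1 := by
    rw [measure_compl hDmeas (measure_ne_top P D), hDnull, measure_univ, tsub_zero]
  have hPC : ∀ j, P (C j) = P (A j) := by
    intro j
    have hid := measure_inter_add_diff (μ := P) (A j) hDmeas.compl
    have h0 : P (A j \ Dᶜ) = 0 :=
      measure_mono_null (fun ω hω => by simpa using hω.2) hDnull
    rw [← hid, h0, add_zero]
  have hsum : ∑ j : Fin (N+1), P (A j) = 1 := by
    rw [← hPDc, ← hCunion, measure_iUnion hCdisj fun j => (hAmeas j).inter hDmeas.compl]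
    rw [tsum_fintype]
    exact Finset.sum_congr rfl fun j _ => (hPC j).symm
  have hconst : ∑ j : Fin (N+1), P (A j) = (N+1 : ℕ) * P (A (Fin.last N)) := by
    rw [Finset.sum_congr rfl fun j _ => stepA j]
    simp [Finset.card_univ]
  have hmain : P (A (Fin.last N)) = ((N : ENNReal) + 1)⁻¹ := by
    have h : ((N : ENNReal) + 1) * P (A (Fin.last N)) = 1 := by
      have hcast : ((N+1:ℕ) : ENNReal) = (N:ENNReal)+1 := by push_cast; ring
      rw [← hcast, ← hconst]; exact hsum
    have hne : ((N : ENNReal) + 1) ≠ 0 := (lt_of_lt_of_le zero_lt_one le_add_self).ne'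
    have hnetop : ((N : ENNReal) + 1) ≠ ⊤ :=
      ENNReal.add_ne_top.2 ⟨ENNReal.natCast_ne_top N, ENNReal.one_ne_top⟩
    calc P (A (Fin.last N)) = ((N : ENNReal)+1)⁻¹ * (((N : ENNReal)+1) * P (A (Fin.last N))) := by
          rw [← mul_assoc, ENNReal.inv_mul_cancel hne hnetop, one_mul]
      _ = ((N : ENNReal)+1)⁻¹ := by rw [h, mul_one]
  have : {ω | (Finset.univ.filter (fun i => S i ω ≤ S (Fin.last N) ω)).card = k}
      = A (Fin.last N) := rfl
  rw [this, hmain]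
end

section
/- Let N ≥ 1 and let S_1, …, S_N, S_{N+1} be real-valued random variables that are exchangeable and almost surely pairwise distinct. For k ∈ {1, …, N} let S_{(k)} denote the k-th smallest value among the calibration scores S_1, …, S_N only. Then for every k ∈ {1, …, N}, ℙ(S_{N+1} ≤ S_{(k)}) = k/(N+1). -/
open MeasureTheory

/-- The `k`-th smallest value (k = 1, …, m) among `v 0, …, v (m-1)`. -/
noncomputable def orderStat {m : ℕ} (v : Fin m → ℝ) (k : ℕ) : ℝ :=
  ((List.ofFn v).insertionSort (· ≤ ·)).getD (k - 1) 0

theorem countP_ofFn' {m : ℕ} (v : Fin m → ℝ) (p : ℝ → Prop) [DecidablePred p] :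
    ((List.ofFn v).countP fun x => decide (p x)) = (Finset.univ.filter (fun i => p (v i))).card := by
  rw [List.ofFn_eq_map, List.countP_map, List.countP_eq_length_filter, Fin.univ_def]
  simp [Finset.filter, Finset.card, Multiset.filter_coe, Function.comp]
  rfl

theorem sorted_le_getD_iff (l : List ℝ) (hl : l.Pairwise (· ≤ ·)) (k : ℕ) (hk : k < l.length)
    (t : ℝ) : t ≤ l.getD k 0 ↔ l.countP (fun x => decide (x < t)) ≤ k := by
  rw [List.getD_eq_getElem _ _ hk]
  constructor
  · intro h
    have hsplit : l.countP (fun x => decide (x < t))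
        = (l.take k).countP (fun x => decide (x < t))
          + (l.drop k).countP (fun x => decide (x < t)) := by
      conv_lhs => rw [← List.take_append_drop k l]
      rw [List.countP_append]
    have hdrop : (l.drop k).countP (fun x => decide (x < t)) = 0 := by
      rw [List.countP_eq_zero]
      intro a ha
      obtain ⟨i, hi, rfl⟩ := List.mem_iff_getElem.mp ha
      have hlen : k + i < l.length := by
        have := List.length_drop (i := k) (l := l) ▸ hi; omega
      rw [List.getElem_drop]
      have h2 : l.get ⟨k, hk⟩ ≤ l.get ⟨k + i, hlen⟩ := hl.rel_get_of_le (by simp)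
      simp only [decide_eq_true_eq]
      push_neg
      exact le_trans h h2
    have htake : (l.take k).countP (fun x => decide (x < t)) ≤ k :=
      le_trans List.countP_le_length (by simp)
    omega
  · intro h
    by_contra hcon
    push_neg at hcon
    have hall : ∀ a ∈ l.take (k+1), decide (a < t) = true := by
      intro a ha
      obtain ⟨i, hi, rfl⟩ := List.mem_iff_getElem.mp ha
      have hilen : i < l.length := by
        have := List.length_take (i := k+1) (l := l) ▸ hi
        have := lt_min_iff.mp this; omega
      rw [List.getElem_take]
      have h3 : l.get ⟨i, hilen⟩ ≤ l.get ⟨k, hk⟩ := by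
        apply hl.rel_get_of_le
        have := List.length_take (i := k+1) (l := l) ▸ hi
        have := lt_min_iff.mp this
        simp; omega
      simp only [decide_eq_true_eq]
      exact lt_of_le_of_lt h3 hcon
    have h1 : (l.take (k+1)).countP (fun x => decide (x < t)) = (l.take (k+1)).length :=
      List.countP_eq_length.mpr hall
    have h2 : (l.take (k+1)).length = k + 1 := by simp; omega
    have hsplit : l.countP (fun x => decide (x < t))
        = (l.take (k+1)).countP (fun x => decide (x < t))
          + (l.drop (k+1)).countP (fun x => decide (x < t)) := by
      conv_lhs => rw [← List.take_append_drop (k+1) l]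
      rw [List.countP_append]
    omega

theorem le_orderStat_iff {m : ℕ} (v : Fin m → ℝ) {k : ℕ} (hk1 : 1 ≤ k) (hk2 : k ≤ m) (t : ℝ) :
    t ≤ orderStat v k ↔ (Finset.univ.filter (fun i => v i < t)).card ≤ k - 1 := by
  have hk : k - 1 < ((List.ofFn v).insertionSort (· ≤ ·)).length := by simp; omega
  rw [orderStat, sorted_le_getD_iff _ (List.pairwise_insertionSort _ _) _ hk t,
    (List.perm_insertionSort (· ≤ ·) (List.ofFn v)).countP_eq, countP_ofFn']

noncomputable def rankAux {n : ℕ} (v : Fin n → ℝ) (i : Fin n) : ℕ :=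
  (Finset.univ.filter (fun m => v m ≤ v i)).card

theorem measurable_rankAux {n : ℕ} (i : Fin n) :
    Measurable (fun v : Fin n → ℝ => rankAux v i) := by
  have : (fun v : Fin n → ℝ => rankAux v i)
      = fun v => ∑ m : Fin n, if v m ≤ v i then 1 else 0 := by
    funext v; rw [rankAux, Finset.card_filter]
  rw [this]
  exact Finset.measurable_sum _ fun m _ =>
    Measurable.ite (measurableSet_le (measurable_pi_apply m) (measurable_pi_apply i))
      measurable_const measurable_const

theorem rankAux_comp_perm {n : ℕ} (v : Fin n → ℝ) (π : Equiv.Perm (Fin n)) (i : Fin n) :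
    rankAux (v ∘ π) i = rankAux v (π i) := by
  unfold rankAux
  apply Finset.card_bij' (fun a _ => π a) (fun a _ => π.symm a) <;> simp

theorem rankAux_pos {n : ℕ} (v : Fin n → ℝ) (i : Fin n) : 1 ≤ rankAux v i :=
  Finset.card_pos.mpr ⟨i, by simp⟩

theorem rankAux_le {n : ℕ} (v : Fin n → ℝ) (i : Fin n) : rankAux v i ≤ n :=
  le_trans (Finset.card_filter_le _ _) (by simp)

theorem rankAux_injective {n : ℕ} {v : Fin n → ℝ} (hv : Function.Injective v) :
    Function.Injective (rankAux v) := by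
  intro i j hij
  by_contra hne
  have hvij : v i ≠ v j := fun h => hne (hv h)
  rcases lt_or_gt_of_ne hvij with h | h
  · have hss : (Finset.univ.filter (fun m => v m ≤ v i))
        ⊂ (Finset.univ.filter (fun m => v m ≤ v j)) := by
      constructor
      · intro m hm; simp only [Finset.mem_filter] at *
        exact ⟨Finset.mem_univ m, le_trans hm.2 h.le⟩
      · intro hsub
        have := hsub (by simp : j ∈ Finset.univ.filter (fun m => v m ≤ v j))
        simp only [Finset.mem_filter] at this
        exact absurd this.2 (not_le.mpr h)
    exact absurd hij (Nat.ne_of_lt (Finset.card_lt_card hss))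
  · have hss : (Finset.univ.filter (fun m => v m ≤ v j))
        ⊂ (Finset.univ.filter (fun m => v m ≤ v i)) := by
      constructor
      · intro m hm; simp only [Finset.mem_filter] at *
        exact ⟨Finset.mem_univ m, le_trans hm.2 h.le⟩
      · intro hsub
        have := hsub (by simp : i ∈ Finset.univ.filter (fun m => v m ≤ v i))
        simp only [Finset.mem_filter] at this
        exact absurd this.2 (not_le.mpr h)
    exact absurd hij.symm (Nat.ne_of_lt (Finset.card_lt_card hss))

theorem rankAux_surj {n : ℕ} {v : Fin n → ℝ} (hv : Function.Injective v) {j : ℕ}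
    (hj : j ∈ Finset.Icc 1 n) : ∃ i, rankAux v i = j := by
  have himg : Finset.univ.image (rankAux v) = Finset.Icc 1 n := by
    apply Finset.eq_of_subset_of_card_le
    · intro x hx
      simp only [Finset.mem_image] at hx
      obtain ⟨i, _, rfl⟩ := hx
      simp only [Finset.mem_Icc]
      exact ⟨rankAux_pos v i, rankAux_le v i⟩
    · rw [Finset.card_image_of_injective _ (rankAux_injective hv)]
      simp
  have := himg ▸ hj
  simpa [Finset.mem_image] using this

/-- For exchangeable, a.s. pairwise distinct real random variables
`S 0, …, S N` (calibration scores `S 0, …, S (N-1)` and test score `S N = S (Fin.last N)`),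
letting `S_(k)` be the `k`-th smallest among the `N` calibration scores only, we have
`ℙ(S_{N+1} ≤ S_(k)) = k / (N + 1)` for every `k = 1, …, N`. -/
theorem prob_le_orderStat_calibration
    {Ω : Type*} [MeasurableSpace Ω] (P : Measure Ω) [IsProbabilityMeasure P]
    (N : ℕ) (hN : 1 ≤ N) (S : Fin (N + 1) → Ω → ℝ)
    (hmeas : ∀ i, Measurable (S i))
    (hexch : ∀ π : Equiv.Perm (Fin (N + 1)),
      Measure.map (fun ω => fun i => S (π i) ω) P
        = Measure.map (fun ω => fun i => S i ω) P)
    (hdist : ∀ i j, i ≠ j → P {ω | S i ω = S j ω} = 0)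
    (k : ℕ) (hk1 : 1 ≤ k) (hk2 : k ≤ N) :
    P {ω | S (Fin.last N) ω ≤ orderStat (fun i : Fin N => S i.castSucc ω) k}
      = (k : ENNReal) / ((N : ENNReal) + 1) := by
  classical
  set V : Ω → (Fin (N+1) → ℝ) := fun ω i => S i ω with hV
  have hVmeas : Measurable V := measurable_pi_lambda _ hmeas
  set G : Set Ω := {ω | Function.Injective fun i => S i ω} with hG
  have hGm : MeasurableSet G := by
    have hGe : G = ⋂ (i) (j), {ω | S i ω = S j ω → i = j} := by
      ext ω; simp only [hG, Set.mem_setOf_eq, Set.mem_iInter, Function.Injective]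
    rw [hGe]
    refine MeasurableSet.iInter fun i => MeasurableSet.iInter fun j => ?_
    by_cases hij : i = j
    · subst hij
      have : {ω : Ω | S i ω = S i ω → i = i} = Set.univ := by
        ext ω; simp
      rw [this]; exact MeasurableSet.univ
    · have : {ω : Ω | S i ω = S j ω → i = j} = {ω | S i ω = S j ω}ᶜ := by
        ext ω; simp only [Set.mem_setOf_eq, Set.mem_compl_iff]
        exact ⟨fun h h' => hij (h h'), fun h h' => absurd h' h⟩
      rw [this]
      exact (measurableSet_eq_fun (hmeas i) (hmeas j)).compl
  have hGc : P Gᶜ = 0 := by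
    have hsub : Gᶜ ⊆ ⋃ (i) (j), {ω | i ≠ j ∧ S i ω = S j ω} := by
      intro ω hω
      simp only [hG, Set.mem_compl_iff, Set.mem_setOf_eq, Function.Injective] at hω
      push_neg at hω
      obtain ⟨i, j, hij, hne⟩ := hω
      exact Set.mem_iUnion.mpr ⟨i, Set.mem_iUnion.mpr ⟨j, hne, hij⟩⟩
    refine measure_mono_null hsub (measure_iUnion_null fun i => measure_iUnion_null fun j => ?_)
    by_cases hij : i = j
    · subst hij; simp
    · exact measure_mono_null (fun ω hω => hω.2) (hdist i j hij)
  have hPG : P G = 1 := by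
    have := measure_add_measure_compl hGm (μ := P)
    rw [hGc, add_zero, measure_univ] at this
    exact this
  have hAm : ∀ (i : Fin (N+1)) (j : ℕ), MeasurableSet {ω | rankAux (V ω) i = j} := fun i j =>
    ((measurable_rankAux i).comp hVmeas) (measurableSet_singleton j)
  have key : ∀ (i : Fin (N+1)) (j : ℕ),
      P {ω | rankAux (V ω) i = j} = P {ω | rankAux (V ω) (Fin.last N) = j} := by
    intro i j
    set π := Equiv.swap (Fin.last N) i with hπ
    have hπm : Measurable fun ω => fun m => S (π m) ω :=
      measurable_pi_lambda _ fun m => hmeas _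
    have hset : MeasurableSet {v : Fin (N+1) → ℝ | rankAux v (Fin.last N) = j} :=
      measurable_rankAux _ (measurableSet_singleton j)
    have h1 : P {ω | rankAux (V ω) i = j}
        = Measure.map (fun ω => fun m => S (π m) ω) P {v | rankAux v (Fin.last N) = j} := by
      rw [Measure.map_apply hπm hset]
      congr 1
      ext ω
      simp only [Set.mem_setOf_eq, Set.mem_preimage]
      have he : (fun m => S (π m) ω) = V ω ∘ π := rfl
      rw [he, rankAux_comp_perm]
      have hl : π (Fin.last N) = i := Equiv.swap_apply_left _ _
      rw [hl]
    rw [h1, hexch π, Measure.map_apply hVmeas hset]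
    rfl
  have huniform : ∀ j ∈ Finset.Icc 1 (N+1),
      P {ω | rankAux (V ω) (Fin.last N) = j} = ((N : ENNReal) + 1)⁻¹ := by
    intro j hj
    set B : Fin (N+1) → Set Ω := fun i => {ω | rankAux (V ω) i = j} ∩ G with hB
    have hBm : ∀ i, MeasurableSet (B i) := fun i => (hAm i j).inter hGm
    have hdisj : Pairwise (Function.onFun Disjoint B) := by
      intro a b hab
      refine Set.disjoint_left.mpr ?_
      rintro ω ⟨ha, hωG⟩ ⟨hb, -⟩
      exact hab (rankAux_injective hωG (ha.trans hb.symm))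
    have hcover : ⋃ i, B i = G := by
      ext ω
      simp only [hB, Set.mem_iUnion, Set.mem_inter_iff, Set.mem_setOf_eq]
      constructor
      · rintro ⟨i, -, h⟩; exact h
      · intro hωG
        obtain ⟨i, hi⟩ := rankAux_surj hωG hj
        exact ⟨i, hi, hωG⟩
    have hsum : ∑ i : Fin (N+1), P (B i) = 1 := by
      rw [← tsum_fintype (L := SummationFilter.unconditional _), ← measure_iUnion hdisj hBm, hcover, hPG]
    have hconst : ∀ i : Fin (N+1), P (B i) = P {ω | rankAux (V ω) (Fin.last N) = j} := by
      intro i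
      rw [hB]
      simp only
      rw [measure_inter_conull hGc]
      exact key i j
    have hmul : ((N : ENNReal) + 1) * P {ω | rankAux (V ω) (Fin.last N) = j} = 1 := by
      have h1 : ∑ i : Fin (N+1), P (B i)
          = ((N + 1 : ℕ) : ENNReal) * P {ω | rankAux (V ω) (Fin.last N) = j} := by
        rw [Finset.sum_congr rfl fun i _ => hconst i, Finset.sum_const, Finset.card_univ,
          Fintype.card_fin, nsmul_eq_mul]
      have hcast : ((N : ENNReal) + 1) = ((N + 1 : ℕ) : ENNReal) := by push_cast; ring
      rw [hcast, ← h1, hsum]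
    have hne : ((N : ENNReal) + 1) ≠ 0 := by simp
    have htop : ((N : ENNReal) + 1) ≠ ⊤ := by
      simp [ENNReal.add_ne_top, ENNReal.natCast_ne_top]
    rw [← one_div]
    exact (ENNReal.eq_div_iff hne htop).mpr hmul
  -- characterization of the event on G
  have hrank_eq : ∀ ω ∈ G, rankAux (V ω) (Fin.last N)
      = 1 + (Finset.univ.filter
          (fun i : Fin N => S i.castSucc ω < S (Fin.last N) ω)).card := by
    intro ω hωG
    rw [rankAux, Fin.univ_castSuccEmb, Finset.filter_cons]
    have hle : V ω (Fin.last N) ≤ V ω (Fin.last N) := le_refl _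
    rw [if_pos hle, Finset.card_cons, Finset.filter_map, Finset.card_map]
    rw [add_comm 1]
    congr 1
    apply Finset.card_bij' (fun a _ => a) (fun a _ => a)
    · intro a ha
      rw [Finset.mem_filter] at ha
      simp only [Finset.mem_filter, Function.comp_apply, Fin.coe_castSuccEmb] at *
      refine ⟨Finset.mem_univ a, ?_⟩
      rcases lt_or_eq_of_le ha.2 with h | h
      · exact h
      · exfalso
        have : a.castSucc = Fin.last N := hωG h
        exact absurd this (Fin.ne_of_lt (Fin.castSucc_lt_last a))
    · intro a ha
      rw [Finset.mem_filter] at ha ⊢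
      simp only [Finset.mem_filter, Function.comp_apply, Fin.coe_castSuccEmb] at *
      exact ⟨Finset.mem_univ a, le_of_lt ha.2⟩
    · intros; rfl
    · intros; rfl
  have hEiff : ∀ ω ∈ G,
      (S (Fin.last N) ω ≤ orderStat (fun i : Fin N => S i.castSucc ω) k
        ↔ rankAux (V ω) (Fin.last N) ∈ Finset.Icc 1 k) := by
    intro ω hωG
    rw [le_orderStat_iff _ hk1 hk2, hrank_eq ω hωG, Finset.mem_Icc]
    omega
  -- final computation
  set A : ℕ → Set Ω := fun j => {ω | rankAux (V ω) (Fin.last N) = j} with hA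
  have hEG : {ω | S (Fin.last N) ω ≤ orderStat (fun i : Fin N => S i.castSucc ω) k} ∩ G
      = (⋃ j ∈ Finset.Icc 1 k, A j) ∩ G := by
    ext ω
    simp only [Set.mem_inter_iff, Set.mem_setOf_eq, Set.mem_iUnion, hA]
    constructor
    · rintro ⟨hE, hωG⟩
      have := (hEiff ω hωG).mp hE
      exact ⟨⟨_, this, rfl⟩, hωG⟩
    · rintro ⟨⟨j', hj', hr⟩, hωG⟩
      refine ⟨(hEiff ω hωG).mpr ?_, hωG⟩
      rw [hr]; exact hj'
  have hAdisj : (↑(Finset.Icc 1 k) : Set ℕ).PairwiseDisjoint (fun j => A j ∩ G) := by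
    intro a _ b _ hab
    refine Set.disjoint_left.mpr ?_
    rintro ω ⟨ha, -⟩ ⟨hb, -⟩
    exact hab (ha.symm.trans hb)
  calc P {ω | S (Fin.last N) ω ≤ orderStat (fun i : Fin N => S i.castSucc ω) k}
      = P ({ω | S (Fin.last N) ω ≤ orderStat (fun i : Fin N => S i.castSucc ω) k} ∩ G) :=
        (measure_inter_conull hGc).symm
    _ = P ((⋃ j ∈ Finset.Icc 1 k, A j) ∩ G) := by rw [hEG]
    _ = P (⋃ j ∈ Finset.Icc 1 k, (A j ∩ G)) := by
        rw [Set.iUnion₂_inter]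
    _ = ∑ j ∈ Finset.Icc 1 k, P (A j ∩ G) :=
        measure_biUnion_finset hAdisj (fun j _ => (hAm _ j).inter hGm)
    _ = ∑ j ∈ Finset.Icc 1 k, ((N : ENNReal) + 1)⁻¹ := by
        refine Finset.sum_congr rfl fun j hj => ?_
        rw [measure_inter_conull hGc]
        refine huniform j ?_
        simp only [Finset.mem_Icc] at *
        omega
    _ = (k : ENNReal) * ((N : ENNReal) + 1)⁻¹ := by
        rw [Finset.sum_const, Nat.card_Icc, nsmul_eq_mul, Nat.add_sub_cancel]
    _ = (k : ENNReal) / ((N : ENNReal) + 1) := (div_eq_mul_inv _ _).symm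
end
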